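/- The optimal policy for the single-armed bandit with subsidy m is a threshold policy: there exists ω*_β(m) ∈ ℝ such that it is optimal to activate the arm exactly when ω > ω*_β(m). In particular, since V_{β,m}(·;u=1) is affine in ω, V_{β,m}(·;u=0) is convex in ω, V_{β,m}(0;u=1) ≤ V_{β,m}(0;u=0) and V_{β,m}(1;u=1) > V_{β,m}(1;u=0) when 0 ≤ m < 1, the two curves intersect at a unique point. -/

import Mathlib

theorem stmt11 (β m p01 p11 : ℝ) (hβ : β ∈ Set.Ico (0:ℝ) 1) (hm : m ∈ Set.Ico (0:ℝ) 1)
    (h01 : p01 ∈ Set.Icc (0:ℝ) 1) (h11 : p11 ∈ Set.Icc (0:ℝ) 1)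
    (T : ℝ → ℝ) (hT : ∀ ω, T ω = ω * p11 + (1 - ω) * p01)
    (V V0 V1 : ℝ → ℝ)
    (hconv : ConvexOn ℝ (Set.Icc (0:ℝ) 1) V)
    (hcont : ContinuousOn V (Set.Icc (0:ℝ) 1))
    (hV0 : ∀ ω, V0 ω = m + β * V (T ω))
    (hV1 : ∀ ω, V1 ω = ω + β * (ω * V p11 + (1 - ω) * V p01))
    (hmax : ∀ ω ∈ Set.Icc (0:ℝ) 1, V ω = max (V0 ω) (V1 ω)) :
    ∃ ωs ∈ Set.Icc (0:ℝ) 1,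
      (∀ ω ∈ Set.Icc (0:ℝ) 1, (V1 ω > V0 ω ↔ ωs < ω)) ∧ V1 ωs = V0 ωs := by
  obtain ⟨hβ0, hβ1⟩ := hβ
  obtain ⟨hm0, hm1⟩ := hm
  set g : ℝ → ℝ := fun ω => V1 ω - V0 ω with hgdef
  have hTmem : ∀ ω ∈ Set.Icc (0:ℝ) 1, T ω ∈ Set.Icc (0:ℝ) 1 := by
    intro ω hω
    rw [hT]
    constructor
    · nlinarith [h01.1, h01.2, h11.1, h11.2, hω.1, hω.2]
    · nlinarith [h01.1, h01.2, h11.1, h11.2, hω.1, hω.2]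
  -- continuity of g on [0,1]
  have hTcont : ContinuousOn T (Set.Icc (0:ℝ) 1) := by
    have hTeq : T = fun ω => ω * p11 + (1 - ω) * p01 := funext hT
    rw [hTeq]; fun_prop
  have hV0cont : ContinuousOn V0 (Set.Icc (0:ℝ) 1) := by
    have hVT : ContinuousOn (fun ω => V (T ω)) (Set.Icc (0:ℝ) 1) :=
      hcont.comp hTcont hTmem
    have hV0eq : V0 = fun ω => m + β * V (T ω) := funext hV0
    rw [hV0eq]
    exact continuousOn_const.add (continuousOn_const.mul hVT)
  have hV1cont : ContinuousOn V1 (Set.Icc (0:ℝ) 1) := by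
    have hV1eq : V1 = fun ω => ω + β * (ω * V p11 + (1 - ω) * V p01) := funext hV1
    rw [hV1eq]; fun_prop
  have hgcont : ContinuousOn g (Set.Icc (0:ℝ) 1) := hV1cont.sub hV0cont
  -- concavity of g
  have hgconc : ∀ x ∈ Set.Icc (0:ℝ) 1, ∀ y ∈ Set.Icc (0:ℝ) 1, ∀ a b : ℝ,
      0 ≤ a → 0 ≤ b → a + b = 1 → a * g x + b * g y ≤ g (a * x + b * y) := by
    intro x hx y hy a b ha hb hab
    have hb' : b = 1 - a := by linarith
    subst hb'
    have hab : a + (1 - a) = 1 := by ring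
    have hTc : T (a * x + (1 - a) * y) = a * T x + (1 - a) * T y := by
      rw [hT, hT, hT]; ring
    have hVc : V (a * T x + (1 - a) * T y) ≤ a * V (T x) + (1 - a) * V (T y) := by
      have := hconv.2 (hTmem x hx) (hTmem y hy) ha hb hab
      simpa [smul_eq_mul] using this
    have hVc' : V (T (a * x + (1 - a) * y)) ≤ a * V (T x) + (1 - a) * V (T y) := by
      rw [hTc]; exact hVc
    have hβV : β * V (T (a * x + (1 - a) * y)) ≤ β * (a * V (T x) + (1 - a) * V (T y)) :=
      mul_le_mul_of_nonneg_left hVc' hβ0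
    simp only [hgdef, hV0, hV1]
    linarith [hβV]
  -- values at endpoints
  have hT0 : T 0 = p01 := by rw [hT]; ring
  have hT1 : T 1 = p11 := by rw [hT]; ring
  have hg0 : g 0 ≤ 0 := by
    simp only [hgdef, hV0, hV1, hT0]
    nlinarith
  have hg1 : 0 < g 1 := by
    simp only [hgdef, hV0, hV1, hT1]
    nlinarith
  -- the set
  set S : Set ℝ := {ω | ω ∈ Set.Icc (0:ℝ) 1 ∧ g ω ≤ 0} with hSdef
  have hS0 : (0:ℝ) ∈ S := ⟨⟨le_refl 0, zero_le_one⟩, hg0⟩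
  have hSne : S.Nonempty := ⟨0, hS0⟩
  have hSbdd : BddAbove S := ⟨1, fun x hx => hx.1.2⟩
  have hSclosed : IsClosed S := by
    have : S = Set.Icc (0:ℝ) 1 ∩ g ⁻¹' Set.Iic 0 := by
      ext x; simp [hSdef, Set.mem_Icc]
    rw [this]
    exact hgcont.preimage_isClosed_of_isClosed isClosed_Icc isClosed_Iic
  set ωs : ℝ := sSup S with hωsdef
  have hωsS : ωs ∈ S := hSclosed.csSup_mem hSne hSbdd
  have hωsIcc : ωs ∈ Set.Icc (0:ℝ) 1 := hωsS.1
  have hgωs_le : g ωs ≤ 0 := hωsS.2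
  -- ω in [0,1] with ω > ωs has g ω > 0
  have hright : ∀ ω ∈ Set.Icc (0:ℝ) 1, ωs < ω → 0 < g ω := by
    intro ω hω hlt
    by_contra h
    push_neg at h
    have : ω ∈ S := ⟨hω, h⟩
    exact absurd (le_csSup hSbdd this) (not_le.2 hlt)
  -- g ωs ≥ 0
  have hωs_lt1 : ωs < 1 := by
    rcases lt_or_eq_of_le hωsIcc.2 with h | h
    · exact h
    · exfalso; rw [h] at hgωs_le; linarith
  have hgωs_ge : 0 ≤ g ωs := by
    have hsub : Set.Ioc ωs 1 ⊆ Set.Icc (0:ℝ) 1 := fun x hx =>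
      ⟨le_trans hωsIcc.1 (le_of_lt hx.1), hx.2⟩
    have htend : Filter.Tendsto g (nhdsWithin ωs (Set.Ioc ωs 1)) (nhds (g ωs)) :=
      (hgcont ωs hωsIcc).mono hsub
    haveI : (nhdsWithin ωs (Set.Ioc ωs 1)).NeBot := by
      rw [nhdsWithin_Ioc_eq_nhdsGT hωs_lt1]
      infer_instance
    have hev : ∀ᶠ x in nhdsWithin ωs (Set.Ioc ωs 1), 0 ≤ g x := by
      filter_upwards [self_mem_nhdsWithin] with x hx
      exact le_of_lt (hright x (hsub hx) hx.1)
    exact ge_of_tendsto htend hev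
  have hgωs : g ωs = 0 := le_antisymm hgωs_le hgωs_ge
  refine ⟨ωs, hωsIcc, ?_, ?_⟩
  · intro ω hω
    constructor
    · intro hgt
      have hgpos : 0 < g ω := by simp [hgdef]; linarith
      by_contra h
      push_neg at h
      rcases lt_or_eq_of_le h with hlt | heq
      · -- ω < ωs : concavity contradiction
        have hω1 : ω < 1 := lt_trans hlt hωs_lt1
        have ha : (0:ℝ) < (1 - ωs) / (1 - ω) := by
          apply div_pos <;> linarith
        have hb : (0:ℝ) < (ωs - ω) / (1 - ω) := by
          apply div_pos <;> linarith
        have hne : (1:ℝ) - ω ≠ 0 := by intro h'; linarith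
        have hab : (1 - ωs) / (1 - ω) + (ωs - ω) / (1 - ω) = 1 := by
          field_simp
          ring
        have hcomb : (1 - ωs) / (1 - ω) * ω + (ωs - ω) / (1 - ω) * 1 = ωs := by
          field_simp
          ring
        have := hgconc ω hω 1 ⟨zero_le_one, le_refl 1⟩ _ _ ha.le hb.le hab
        rw [hcomb, hgωs] at this
        linarith [mul_pos ha hgpos, mul_pos hb hg1]
      · rw [← heq] at hgωs; simp [hgdef] at hgωs; linarith
    · intro hlt
      have := hright ω hω hlt
      simp [hgdef] at this
      linarith
  · have : g ωs = 0 := hgωs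
    simp [hgdef] at this
    linarith
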